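/- Let r ≥ 3 and let G be a C_{1r}-free linear r-graph with an edge e = {u_1,...,u_r} satisfying d(u_1) = d(u_2) = (r-1)^2 + 1 and d(u_i) ≥ (r-1)^2 for 3 ≤ i ≤ r. Then the set of vertices outside e lying on a common edge with u_1 equals the set of vertices outside e lying on a common edge with u_2, i.e., G(u_1) = G(u_2). -/

import Mathlib

open Finset

/-- A linear `r`-uniform hypergraph: every edge has `r` vertices and
any two distinct edges intersect in at most one vertex. -/
def IsLinear {V : Type*} [DecidableEq V] (r : ℕ) (E : Finset (Finset V)) : Prop :=
  (∀ e ∈ E, e.card = r) ∧ ∀ e ∈ E, ∀ f ∈ E, e ≠ f → (e ∩ f).card ≤ 1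

/-- The degree of a vertex: the number of edges containing it. -/
def degree {V : Type*} [DecidableEq V] (E : Finset (Finset V)) (v : V) : ℕ :=
  (E.filter (fun e => v ∈ e)).card

/-- `E` contains a copy of the `r`-crown `C_{1r}`: `r` pairwise disjoint edges
together with one edge meeting each of them in exactly one vertex. -/
def HasCrown {V : Type*} [DecidableEq V] (r : ℕ) (E : Finset (Finset V)) : Prop :=
  ∃ e ∈ E, ∃ f : Fin r → Finset V,
    (∀ i, f i ∈ E) ∧ (∀ i, f i ≠ e) ∧
    (∀ i j, i ≠ j → f i ∩ f j = ∅) ∧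
    (∀ i, (e ∩ f i).card = 1)

/-- `E` contains a copy of `C*`: `r-2` edges pairwise meeting exactly in a common
vertex `v`, two further edges disjoint from each other and from all the others,
and one edge meeting each of the `r` edges in exactly one vertex, avoiding `v`. -/
def HasCStar {V : Type*} [DecidableEq V] (r : ℕ) (E : Finset (Finset V)) : Prop :=
  ∃ v : V, ∃ e ∈ E, ∃ f : Fin r → Finset V,
    (∀ i, f i ∈ E) ∧ (∀ i, f i ≠ e) ∧
    (∀ i : Fin r, (i : ℕ) < r - 2 → v ∈ f i) ∧
    (∀ i j : Fin r, (i : ℕ) < r - 2 → (j : ℕ) < r - 2 → i ≠ j → f i ∩ f j = {v}) ∧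
    (∀ i j : Fin r, r - 2 ≤ (i : ℕ) → i ≠ j → f i ∩ f j = ∅) ∧
    (∀ i, (e ∩ f i).card = 1) ∧ v ∉ e

section helpers
variable {V : Type*} [DecidableEq V] {r : ℕ} {E : Finset (Finset V)}

lemma inter_eq_singleton (hlin : IsLinear r E) {e f : Finset V} (he : e ∈ E) (hf : f ∈ E)
    (hne : f ≠ e) {p : V} (hpe : p ∈ e) (hpf : p ∈ f) : e ∩ f = {p} := by
  have h1 : (e ∩ f).card ≤ 1 := hlin.2 e he f hf (Ne.symm hne)
  have hp : p ∈ e ∩ f := Finset.mem_inter.2 ⟨hpe, hpf⟩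
  refine Finset.eq_singleton_iff_unique_mem.2 ⟨hp, fun x hx => ?_⟩
  by_contra hxp
  have : 1 < (e ∩ f).card := Finset.one_lt_card.2 ⟨x, hx, p, hp, hxp⟩
  omega

lemma bad_count (hlin : IsLinear r E) (p : V) (S : Finset V) (hp : p ∉ S) :
    (E.filter (fun f => p ∈ f ∧ (f ∩ S).Nonempty)).card ≤ S.card := by
  classical
  apply Finset.card_le_card_of_injOn (fun f => if h : (f ∩ S).Nonempty then h.choose else p)
  · intro f hf
    simp only [Finset.mem_coe, Finset.mem_filter] at hf
    beta_reduce
    rw [dif_pos hf.2.2]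
    exact (Finset.mem_inter.1 hf.2.2.choose_spec).2
  · intro f hf f' hf' heq
    simp only [Finset.coe_filter, Set.mem_setOf_eq] at hf hf'
    by_contra hne
    simp only [] at heq
    rw [dif_pos hf.2.2, dif_pos hf'.2.2] at heq
    have h1 := Finset.mem_inter.1 hf.2.2.choose_spec
    have h2 := Finset.mem_inter.1 hf'.2.2.choose_spec
    rw [← heq] at h2
    have hcard := hlin.2 f hf.1 f' hf'.1 hne
    have hxp : hf.2.2.choose ≠ p := fun h => hp (h ▸ h1.2)
    have : 1 < (f ∩ f').card := Finset.one_lt_card.2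
      ⟨p, Finset.mem_inter.2 ⟨hf.2.1, hf'.2.1⟩,
       hf.2.2.choose, Finset.mem_inter.2 ⟨h1.1, h2.1⟩, Ne.symm hxp⟩
    omega

lemma exists_good (hlin : IsLinear r E) {e : Finset V} (he : e ∈ E) {p : V} (hpe : p ∈ e)
    (S : Finset V) (hp : p ∉ S) (hd : S.card + 1 < degree E p) :
    ∃ f ∈ E, f ≠ e ∧ p ∈ f ∧ ∀ x ∈ f, x ∉ S := by
  classical
  have hsplit := Finset.card_filter_add_card_filter_not
    (s := E.filter (fun f => p ∈ f)) (p := fun f => (f ∩ S).Nonempty)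
  rw [Finset.filter_filter, Finset.filter_filter] at hsplit
  have hbad := bad_count hlin p S hp
  set good := E.filter (fun f => p ∈ f ∧ ¬(f ∩ S).Nonempty) with hgood
  have hgc : 2 ≤ good.card := by
    have : degree E p = _ := rfl
    unfold degree at hd
    omega
  have hne : (good.erase e).Nonempty := by
    rw [← Finset.card_pos]
    have := Finset.pred_card_le_card_erase (a := e) (s := good)
    omega
  obtain ⟨f, hf⟩ := hne
  rw [Finset.mem_erase] at hf
  obtain ⟨hfe, hfg⟩ := hf
  rw [hgood, Finset.mem_filter] at hfg
  refine ⟨f, hfg.1, hfe, hfg.2.1, fun x hx hxS => hfg.2.2 ⟨x, Finset.mem_inter.2 ⟨hx, hxS⟩⟩⟩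

lemma sdiff_card_le (hlin : IsLinear r E) {f : Finset V} (hf : f ∈ E) {q : V} (hq : q ∈ f)
    {e : Finset V} (hqe : q ∈ e) : (f \ e).card ≤ r - 1 := by
  have hsub : f \ e ⊆ f.erase q := fun x hx => Finset.mem_erase.2
    ⟨fun h => (Finset.mem_sdiff.1 hx).2 (h ▸ hqe), (Finset.mem_sdiff.1 hx).1⟩
  calc (f \ e).card ≤ (f.erase q).card := Finset.card_le_card hsub
    _ = r - 1 := by rw [Finset.card_erase_of_mem hq, hlin.1 f hf]

lemma greedy (hr : 3 ≤ r) (hlin : IsLinear r E) {e : Finset V} (he : e ∈ E)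
    (u : Fin r → V) (hinj : Function.Injective u) (hmem : ∀ i, u i ∈ e)
    {f1 : Finset V} (hf1E : f1 ∈ E) (hf1ne : f1 ≠ e)
    (hu0 : u ⟨0, lt_of_lt_of_le (Nat.zero_lt_succ 2) hr⟩ ∈ f1)
    (hdi : ∀ i : Fin r, 2 ≤ (i : ℕ) → (r - 1) ^ 2 ≤ degree E (u i)) :
    ∀ k, ∀ _hk : k ≤ r - 2, ∃ g : ℕ → Finset V,
      (∀ i < k, g i ∈ E) ∧ (∀ i < k, g i ≠ e) ∧
      (∀ i, ∀ h : i < k, u ⟨i + 2, by omega⟩ ∈ g i) ∧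
      (∀ i < k, g i ∩ f1 = ∅) ∧
      (∀ i < k, ∀ j < k, i ≠ j → g i ∩ g j = ∅) := by
  intro k
  induction k with
  | zero =>
    intro _
    exact ⟨fun _ => ∅, by omega, by omega, by omega, by omega, by omega⟩
  | succ k ih =>
    intro hk
    obtain ⟨g, hgE, hgne, hgu, hgf1, hgg⟩ := ih (by omega)
    have hk2 : k + 2 < r := by omega
    set p := u ⟨k + 2, hk2⟩ with hp
    have hpe : p ∈ e := hmem _
    set S := (f1 \ e) ∪ (Finset.range k).biUnion (fun j => g j \ e) with hS
    have hpS : p ∉ S := by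
      intro h
      rw [hS, Finset.mem_union] at h
      rcases h with h | h
      · exact (Finset.mem_sdiff.1 h).2 hpe
      · obtain ⟨j, _, hj⟩ := Finset.mem_biUnion.1 h
        exact (Finset.mem_sdiff.1 hj).2 hpe
    have hScard : S.card ≤ (r - 1) + k * (r - 1) := by
      have h1 : (f1 \ e).card ≤ r - 1 := sdiff_card_le hlin hf1E hu0 (hmem _)
      have h2 : ((Finset.range k).biUnion fun j => g j \ e).card ≤ k * (r - 1) := by
        calc _ ≤ ∑ j ∈ Finset.range k, (g j \ e).card := Finset.card_biUnion_le
          _ ≤ ∑ _j ∈ Finset.range k, (r - 1) := Finset.sum_le_sum (fun j hj =>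
              sdiff_card_le hlin (hgE j (Finset.mem_range.1 hj))
                (hgu j (Finset.mem_range.1 hj)) (hmem _))
          _ = k * (r - 1) := by simp [Finset.sum_const, mul_comm]
      calc S.card ≤ (f1 \ e).card + ((Finset.range k).biUnion fun j => g j \ e).card :=
            Finset.card_union_le _ _
        _ ≤ (r - 1) + k * (r - 1) := Nat.add_le_add h1 h2
    have hdeg : (r - 1) ^ 2 ≤ degree E p := hdi ⟨k + 2, hk2⟩ (by simp)
    have hd : S.card + 1 < degree E p := by
      obtain ⟨s, rfl⟩ : ∃ s, r = s + 3 := ⟨r - 3, by omega⟩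
      have hks : k ≤ s := by omega
      have e1 : s + 3 - 1 = s + 2 := rfl
      rw [e1] at hScard hdeg
      have key : (s + 2) + k * (s + 2) + 1 < (s + 2) ^ 2 := by nlinarith
      linarith
    obtain ⟨f, hfE, hfne, hpf, hfS⟩ := exists_good hlin he hpe S hpS hd
    refine ⟨fun i => if i = k then f else g i, ?_, ?_, ?_, ?_, ?_⟩
    · intro i hi
      dsimp only
      by_cases h : i = k
      · rw [if_pos h]; exact hfE
      · rw [if_neg h]; exact hgE i (by omega)
    · intro i hi
      dsimp only
      by_cases h : i = k
      · rw [if_pos h]; exact hfne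
      · rw [if_neg h]; exact hgne i (by omega)
    · intro i hi
      dsimp only
      by_cases h : i = k
      · subst h; rw [if_pos rfl]; exact hpf
      · rw [if_neg h]; exact hgu i (by omega)
    · intro i hi
      dsimp only
      by_cases h : i = k
      · subst h; rw [if_pos rfl]
        rw [Finset.eq_empty_iff_forall_notMem]
        intro x hx
        obtain ⟨hxf, hxf1⟩ := Finset.mem_inter.1 hx
        by_cases hxe : x ∈ e
        · have h1 : e ∩ f = {p} := inter_eq_singleton hlin he hfE hfne hpe hpf
          have h2 : e ∩ f1 = {u ⟨0, by omega⟩} :=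
            inter_eq_singleton hlin he hf1E hf1ne (hmem _) hu0
          have hx1 : x = p := by
            have := Finset.mem_inter.2 ⟨hxe, hxf⟩; rw [h1] at this; simpa using this
          have hx2 : x = u ⟨0, by omega⟩ := by
            have := Finset.mem_inter.2 ⟨hxe, hxf1⟩; rw [h2] at this; simpa using this
          rw [hx1, hp] at hx2
          have := hinj hx2
          simp [Fin.ext_iff] at this
        · exact hfS x hxf (Finset.mem_union_left _ (Finset.mem_sdiff.2 ⟨hxf1, hxe⟩))
      · rw [if_neg h]; exact hgf1 i (by omega)
    · intro i hi j hj hij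
      dsimp only
      have key : ∀ j' < k, f ∩ g j' = ∅ := by
        intro j' hj'
        rw [Finset.eq_empty_iff_forall_notMem]
        intro x hx
        obtain ⟨hxf, hxg⟩ := Finset.mem_inter.1 hx
        by_cases hxe : x ∈ e
        · have h1 : e ∩ f = {p} := inter_eq_singleton hlin he hfE hfne hpe hpf
          have h2 : e ∩ g j' = {u ⟨j' + 2, by omega⟩} :=
            inter_eq_singleton hlin he (hgE j' hj') (hgne j' hj') (hmem _) (hgu j' hj')
          have hx1 : x = p := by
            have := Finset.mem_inter.2 ⟨hxe, hxf⟩; rw [h1] at this; simpa using this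
          have hx2 : x = u ⟨j' + 2, by omega⟩ := by
            have := Finset.mem_inter.2 ⟨hxe, hxg⟩; rw [h2] at this; simpa using this
          rw [hx1, hp] at hx2
          have := hinj hx2
          simp only [Fin.ext_iff] at this
          omega
        · exact hfS x hxf (Finset.mem_union_right _ (Finset.mem_biUnion.2
            ⟨j', Finset.mem_range.2 hj', Finset.mem_sdiff.2 ⟨hxg, hxe⟩⟩))
      by_cases h : i = k
      · rw [if_pos h, if_neg (by omega : ¬ j = k)]
        exact key j (by omega)
      · rw [if_neg h]
        by_cases h' : j = k
        · rw [if_pos h', Finset.inter_comm]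
          exact key i (by omega)
        · rw [if_neg h']
          exact hgg i (by omega) j (by omega) hij

lemma G_subset (hr : 3 ≤ r) (hlin : IsLinear r E) (hfree : ¬ HasCrown r E)
    {e : Finset V} (he : e ∈ E) (u : Fin r → V)
    (hinj : Function.Injective u) (hmem : ∀ i, u i ∈ e)
    (hd2 : (r - 1) ^ 2 + 1 ≤ degree E (u ⟨1, lt_of_lt_of_le (Nat.one_lt_succ_succ 1) hr⟩))
    (hdi : ∀ i : Fin r, 2 ≤ (i : ℕ) → (r - 1) ^ 2 ≤ degree E (u i)) :
    {w : V | w ∉ e ∧ ∃ f ∈ E, u ⟨0, lt_of_lt_of_le (Nat.zero_lt_succ 2) hr⟩ ∈ f ∧ w ∈ f} ⊆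
      {w : V | w ∉ e ∧ ∃ f ∈ E, u ⟨1, lt_of_lt_of_le (Nat.one_lt_succ_succ 1) hr⟩ ∈ f ∧ w ∈ f} := by
  rintro w ⟨hwe, f1, hf1E, hu0, hwf1⟩
  refine ⟨hwe, ?_⟩
  by_contra h2
  push_neg at h2
  exfalso
  apply hfree
  have hf1ne : f1 ≠ e := fun h => hwe (h ▸ hwf1)
  obtain ⟨g, hgE, hgne, hgu, hgf1, hgg⟩ :=
    greedy hr hlin he u hinj hmem hf1E hf1ne hu0 hdi (r - 2) le_rfl
  -- choose f2 through u 1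
  set p := u ⟨1, by omega⟩ with hp
  have hpe : p ∈ e := hmem _
  set S := ((f1 \ e).erase w) ∪ (Finset.range (r - 2)).biUnion (fun j => g j \ e) with hS
  have hpS : p ∉ S := by
    intro h
    rw [hS, Finset.mem_union] at h
    rcases h with h | h
    · exact (Finset.mem_sdiff.1 (Finset.mem_of_mem_erase h)).2 hpe
    · obtain ⟨j, _, hj⟩ := Finset.mem_biUnion.1 h
      exact (Finset.mem_sdiff.1 hj).2 hpe
  have hScard : S.card ≤ (r - 2) + (r - 2) * (r - 1) := by
    have h1 : ((f1 \ e).erase w).card ≤ r - 2 := by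
      have hw : w ∈ f1 \ e := Finset.mem_sdiff.2 ⟨hwf1, hwe⟩
      have := sdiff_card_le hlin hf1E hu0 (hmem _)
      rw [Finset.card_erase_of_mem hw]
      omega
    have h2 : ((Finset.range (r - 2)).biUnion fun j => g j \ e).card ≤ (r - 2) * (r - 1) := by
      calc _ ≤ ∑ j ∈ Finset.range (r - 2), (g j \ e).card := Finset.card_biUnion_le
        _ ≤ ∑ _j ∈ Finset.range (r - 2), (r - 1) := Finset.sum_le_sum (fun j hj =>
            sdiff_card_le hlin (hgE j (Finset.mem_range.1 hj))
              (hgu j (Finset.mem_range.1 hj)) (hmem _))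
        _ = (r - 2) * (r - 1) := by simp [Finset.sum_const, mul_comm]
    calc S.card ≤ _ + _ := Finset.card_union_le _ _
      _ ≤ (r - 2) + (r - 2) * (r - 1) := Nat.add_le_add h1 h2
  have hd : S.card + 1 < degree E p := by
    obtain ⟨s, rfl⟩ : ∃ s, r = s + 3 := ⟨r - 3, by omega⟩
    have e1 : s + 3 - 1 = s + 2 := rfl
    have e2 : s + 3 - 2 = s + 1 := rfl
    rw [e2, e1] at hScard
    rw [e1] at hd2
    have key : (s + 1) + (s + 1) * (s + 2) + 1 < (s + 2) ^ 2 + 1 := by nlinarith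
    linarith
  obtain ⟨f2, hf2E, hf2ne, hpf2, hf2S⟩ := exists_good hlin he hpe S hpS hd
  have hwf2 : w ∉ f2 := h2 f2 hf2E hpf2
  -- basic intersection facts
  have hef1 : e ∩ f1 = {u ⟨0, by omega⟩} := inter_eq_singleton hlin he hf1E hf1ne (hmem _) hu0
  have hef2 : e ∩ f2 = {p} := inter_eq_singleton hlin he hf2E hf2ne hpe hpf2
  -- full disjointness facts
  have d12 : f1 ∩ f2 = ∅ := by
    rw [Finset.eq_empty_iff_forall_notMem]
    intro x hx
    obtain ⟨hx1, hx2⟩ := Finset.mem_inter.1 hx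
    by_cases hxe : x ∈ e
    · have ha : x = u ⟨0, by omega⟩ := by
        have := Finset.mem_inter.2 ⟨hxe, hx1⟩; rw [hef1] at this; simpa using this
      have hb : x = p := by
        have := Finset.mem_inter.2 ⟨hxe, hx2⟩; rw [hef2] at this; simpa using this
      rw [ha, hp] at hb
      have := hinj hb
      simp [Fin.ext_iff] at this
    · have hxw : x ≠ w := fun h => hwf2 (h ▸ hx2)
      exact hf2S x hx2 (Finset.mem_union_left _
        (Finset.mem_erase.2 ⟨hxw, Finset.mem_sdiff.2 ⟨hx1, hxe⟩⟩))
  have d2g : ∀ j < r - 2, f2 ∩ g j = ∅ := by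
    intro j hj
    rw [Finset.eq_empty_iff_forall_notMem]
    intro x hx
    obtain ⟨hx2, hxg⟩ := Finset.mem_inter.1 hx
    by_cases hxe : x ∈ e
    · have heg : e ∩ g j = {u ⟨j + 2, by omega⟩} :=
        inter_eq_singleton hlin he (hgE j hj) (hgne j hj) (hmem _) (hgu j hj)
      have ha : x = p := by
        have := Finset.mem_inter.2 ⟨hxe, hx2⟩; rw [hef2] at this; simpa using this
      have hb : x = u ⟨j + 2, by omega⟩ := by
        have := Finset.mem_inter.2 ⟨hxe, hxg⟩; rw [heg] at this; simpa using this
      rw [ha, hp] at hb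
      have := hinj hb
      simp [Fin.ext_iff] at this
    · exact hf2S x hx2 (Finset.mem_union_right _ (Finset.mem_biUnion.2
        ⟨j, Finset.mem_range.2 hj, Finset.mem_sdiff.2 ⟨hxg, hxe⟩⟩))
  -- assemble the crown
  refine ⟨e, he, fun i => if (i : ℕ) = 0 then f1 else if (i : ℕ) = 1 then f2
    else g ((i : ℕ) - 2), ?_, ?_, ?_, ?_⟩
  · intro i
    dsimp only
    split_ifs with h0 h1
    · exact hf1E
    · exact hf2E
    · exact hgE _ (by omega)
  · intro i
    dsimp only
    split_ifs with h0 h1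
    · exact hf1ne
    · exact hf2ne
    · exact hgne _ (by omega)
  · intro i j hij
    have hij' : (i : ℕ) ≠ (j : ℕ) := fun h => hij (Fin.ext h)
    dsimp only
    split_ifs with h0 h1 h2' h3' h4' h5' h6' h7'
    all_goals first
      | omega
      | exact d12
      | (rw [Finset.inter_comm]; exact d12)
      | (exact hgf1 _ (by omega))
      | (rw [Finset.inter_comm]; exact hgf1 _ (by omega))
      | (exact d2g _ (by omega))
      | (rw [Finset.inter_comm]; exact d2g _ (by omega))
      | (exact hgg _ (by omega) _ (by omega) (by omega))
  · intro i
    have hui : u i ∈ (if (i : ℕ) = 0 then f1 else if (i : ℕ) = 1 then f2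
        else g ((i : ℕ) - 2)) := by
      split_ifs with h0 h1
      · have : i = ⟨0, by omega⟩ := Fin.ext h0
        rw [this]; exact hu0
      · have : i = ⟨1, by omega⟩ := Fin.ext h1
        rw [this]; exact hpf2
      · have hlt : (i : ℕ) - 2 < r - 2 := by have := i.isLt; omega
        have := hgu ((i : ℕ) - 2) hlt
        have hieq : (⟨(i : ℕ) - 2 + 2, by omega⟩ : Fin r) = i := Fin.ext (by simp; omega)
        rwa [hieq] at this
    have hne' : (if (i : ℕ) = 0 then f1 else if (i : ℕ) = 1 then f2
        else g ((i : ℕ) - 2)) ≠ e := by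
      split_ifs with h0 h1
      · exact hf1ne
      · exact hf2ne
      · exact hgne _ (by omega)
    have hiE : (if (i : ℕ) = 0 then f1 else if (i : ℕ) = 1 then f2
        else g ((i : ℕ) - 2)) ∈ E := by
      split_ifs with h0 h1
      · exact hf1E
      · exact hf2E
      · exact hgE _ (by omega)
    dsimp only
    rw [inter_eq_singleton hlin he hiE hne' (hmem i) hui]
    simp

end helpers

/-- For an edge `e = {u_1,…,u_r}` with `d(u_1) = d(u_2) = (r-1)^2 + 1` and
`d(u_i) ≥ (r-1)^2` for `i ≥ 3` in a `C_{1r}`-free linear `r`-graph,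
`G(u_1) = G(u_2)`, where `G(p)` is the set of vertices outside `e`
lying on a common edge with `p`. -/
theorem neighborhood_eq {V : Type*} [DecidableEq V] [Fintype V]
    (r : ℕ) (hr : 3 ≤ r) (E : Finset (Finset V)) (hlin : IsLinear r E)
    (hfree : ¬ HasCrown r E)
    (e : Finset V) (he : e ∈ E) (u : Fin r → V)
    (hinj : Function.Injective u) (hmem : ∀ i, u i ∈ e)
    (hd1 : degree E (u ⟨0, by omega⟩) = (r - 1) ^ 2 + 1)
    (hd2 : degree E (u ⟨1, by omega⟩) = (r - 1) ^ 2 + 1)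
    (hdi : ∀ i : Fin r, 2 ≤ (i : ℕ) → (r - 1) ^ 2 ≤ degree E (u i)) :
    {w : V | w ∉ e ∧ ∃ f ∈ E, u ⟨0, by omega⟩ ∈ f ∧ w ∈ f} =
      {w : V | w ∉ e ∧ ∃ f ∈ E, u ⟨1, by omega⟩ ∈ f ∧ w ∈ f} :=  by
  apply Set.Subset.antisymm
  · exact G_subset hr hlin hfree he u hinj hmem (le_of_eq hd2.symm) hdi
  · set σ : Equiv.Perm (Fin r) := Equiv.swap ⟨0, by omega⟩ ⟨1, by omega⟩ with hσ
    have h0 : (u ∘ σ) ⟨0, by omega⟩ = u ⟨1, by omega⟩ := by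
      simp [hσ, Equiv.swap_apply_left]
    have h1 : (u ∘ σ) ⟨1, by omega⟩ = u ⟨0, by omega⟩ := by
      simp [hσ, Equiv.swap_apply_right]
    have hsub := G_subset hr hlin hfree he (u ∘ σ) (hinj.comp σ.injective)
      (fun i => hmem _) (by rw [h1]; exact le_of_eq hd1.symm)
      (fun i h => by
        have hne0 : i ≠ ⟨0, by omega⟩ := by
          intro hh; rw [hh] at h; simp at h
        have hne1 : i ≠ ⟨1, by omega⟩ := by
          intro hh; rw [hh] at h; simp at h
        have : (u ∘ σ) i = u i := by
          simp [hσ, Equiv.swap_apply_of_ne_of_ne hne0 hne1]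
        rw [this]; exact hdi i h)
    rw [h0, h1] at hsub
    exact hsub
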